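/- For all natural numbers m and n, ∫_{1/4}^{+∞} g_{2m}(z)·g_{2n}(z)·(√(4z−1)/(2π z²)) dz = 1 if m = n and 0 otherwise; that is, the family {g_{2n} : n ∈ ℕ} is orthonormal in L² of the measure with density √(4z−1)/(2π z²) on [1/4, +∞). -/

import Mathlib

open MeasureTheory

/-- The G-polynomials: `G 0 z = 1`, `G 1 z = 1`, `G (n+2) z = G (n+1) z - z * G n z`. -/
noncomputable def G : ℕ → ℝ → ℝ
  | 0, _ => 1
  | 1, _ => 1
  | (n + 2), z => G (n + 1) z - z * G n z

/-- The irrational functions `g n z = G n z / (√z)^n`. -/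
noncomputable def g (n : ℕ) (z : ℝ) : ℝ := G n z / (Real.sqrt z) ^ n

open Real Set intervalIntegral in
lemma Gval (θ : ℝ) (hc : Real.cos θ ≠ 0) :
    ∀ k : ℕ, Real.sin θ * ((2 * Real.cos θ) ^ k * G k (1 / (4 * Real.cos θ ^ 2)))
      = Real.sin ((k + 1) * θ) := by
  intro k
  induction k using Nat.twoStepInduction with
  | zero => simp [G]
  | one =>
    show Real.sin θ * ((2 * Real.cos θ) ^ 1 * 1) = Real.sin (((1:ℕ) + 1) * θ)
    push_cast
    rw [show ((1:ℝ)+1)*θ = 2*θ by ring, Real.sin_two_mul]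
    ring
  | more k ih2 ih1 =>
    have hG : G (k + 2) (1 / (4 * Real.cos θ ^ 2))
        = G (k + 1) (1 / (4 * Real.cos θ ^ 2))
          - (1 / (4 * Real.cos θ ^ 2)) * G k (1 / (4 * Real.cos θ ^ 2)) := rfl
    push_cast at ih1 ih2 ⊢
    have hz : 1 / (4 * Real.cos θ ^ 2) * (2 * Real.cos θ) ^ 2 = 1 := by
      field_simp; ring
    have key : Real.sin θ * ((2 * Real.cos θ) ^ (k+2) * G (k+2) (1 / (4 * Real.cos θ ^ 2)))
        = 2 * Real.cos θ * Real.sin (((k:ℝ) + 1 + 1) * θ) - Real.sin (((k:ℝ) + 1) * θ) := by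
      rw [hG, ← ih1, ← ih2]
      calc Real.sin θ * ((2 * Real.cos θ) ^ (k+2) *
              (G (k+1) (1 / (4 * Real.cos θ ^ 2))
                - 1 / (4 * Real.cos θ ^ 2) * G k (1 / (4 * Real.cos θ ^ 2))))
          = 2 * Real.cos θ * (Real.sin θ * ((2 * Real.cos θ) ^ (k+1) * G (k+1) (1 / (4 * Real.cos θ ^ 2))))
            - (1 / (4 * Real.cos θ ^ 2) * (2 * Real.cos θ) ^ 2)
              * (Real.sin θ * ((2 * Real.cos θ) ^ k * G k (1 / (4 * Real.cos θ ^ 2)))) := by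
            ring
        _ = _ := by rw [hz]; ring
    rw [key]
    have e1 : ((k:ℝ) + 2 + 1) * θ = ((k + 1 + 1) * θ) + θ := by ring
    have e2 : ((k:ℝ) + 1) * θ = ((k + 1 + 1) * θ) - θ := by ring
    rw [e1, e2, Real.sin_add, Real.sin_sub]
    ring

lemma gval (θ : ℝ) (h0 : 0 < θ) (h2 : θ < Real.pi / 2) (k : ℕ) :
    g (2 * k) (1 / (4 * Real.cos θ ^ 2))
      = Real.sin ((2 * k + 1) * θ) / Real.sin θ := by
  have hc : 0 < Real.cos θ := Real.cos_pos_of_mem_Ioo ⟨by linarith [Real.pi_pos], h2⟩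
  have hs : 0 < Real.sin θ := Real.sin_pos_of_pos_of_lt_pi h0 (by linarith [Real.pi_pos])
  have hsq : Real.sqrt (1 / (4 * Real.cos θ ^ 2)) = 1 / (2 * Real.cos θ) := by
    rw [show (1 : ℝ) / (4 * Real.cos θ ^ 2) = (1 / (2 * Real.cos θ))^2 by field_simp; ring]
    exact Real.sqrt_sq (by positivity)
  have key := Gval θ hc.ne' (2 * k)
  unfold g
  rw [hsq]
  push_cast at key ⊢
  rw [div_pow, one_pow, div_div_eq_mul_div, div_eq_div_iff (by positivity) hs.ne']
  nlinarith [key]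

open Real in
lemma prod_to_sum (a b x : ℝ) :
    Real.sin (a * x) * Real.sin (b * x)
      = (Real.cos ((a - b) * x) - Real.cos ((a + b) * x)) / 2 := by
  rw [show (a - b) * x = a*x - b*x by ring, show (a + b) * x = a*x + b*x by ring,
    Real.cos_sub, Real.cos_add]
  ring

lemma hasDerivAt_sin_mul (c x : ℝ) :
    HasDerivAt (fun y => Real.sin (c * y)) (c * Real.cos (c * x)) x := by
  have h := (Real.hasDerivAt_sin (c * x)).comp x ((hasDerivAt_id x).const_mul c)
  exact h.congr_deriv (by ring)

open Real in
lemma sin_int_prod (a b : ℝ) (hab : a - b ≠ 0) (hab' : a + b ≠ 0) :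
    ∫ x in (0:ℝ)..(Real.pi/2), Real.sin (a * x) * Real.sin (b * x)
      = Real.sin ((a - b) * (Real.pi/2)) / (2 * (a - b))
        - Real.sin ((a + b) * (Real.pi/2)) / (2 * (a + b)) := by
  have key : ∀ x ∈ Set.uIcc (0:ℝ) (Real.pi/2),
      HasDerivAt (fun y => Real.sin ((a-b) * y) / (2*(a-b)) - Real.sin ((a+b) * y) / (2*(a+b)))
        (Real.sin (a * x) * Real.sin (b * x)) x := by
    intro x _
    have h1 := ((hasDerivAt_sin_mul (a-b) x).div_const (2*(a-b))).sub
      ((hasDerivAt_sin_mul (a+b) x).div_const (2*(a+b)))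
    refine h1.congr_deriv ?_
    rw [prod_to_sum]
    field_simp
  have := intervalIntegral.integral_eq_sub_of_hasDerivAt key
    (by apply Continuous.intervalIntegrable; continuity)
  simp only [this]
  simp

lemma sin_sq_int (a : ℝ) (ha : a ≠ 0) :
    ∫ x in (0:ℝ)..(Real.pi/2), Real.sin (a * x) * Real.sin (a * x)
      = Real.pi / 4 - Real.sin (a * Real.pi) / (4 * a) := by
  have key : ∀ x ∈ Set.uIcc (0:ℝ) (Real.pi/2),
      HasDerivAt (fun y => y / 2 - Real.sin (2 * a * y) / (4*a))
        (Real.sin (a * x) * Real.sin (a * x)) x := by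
    intro x _
    have h1 := ((hasDerivAt_id x).div_const 2).sub
      ((hasDerivAt_sin_mul (2*a) x).div_const (4*a))
    refine h1.congr_deriv ?_
    have := prod_to_sum a a x
    rw [this]
    simp only [sub_self, zero_mul, Real.cos_zero]
    field_simp
    ring
  have := intervalIntegral.integral_eq_sub_of_hasDerivAt key
    (by apply Continuous.intervalIntegrable; continuity)
  simp only [this]
  rw [show 2 * a * (Real.pi / 2) = a * Real.pi by ring]
  simp
  ring

theorem stmt_16 (m n : ℕ) :
    ∫ z in Set.Ioi (1 / 4 : ℝ),
        g (2 * m) z * g (2 * n) z * (Real.sqrt (4 * z - 1) / (2 * Real.pi * z ^ 2)) =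
      if m = n then 1 else 0 := by
  have pi_pos := Real.pi_pos
  set f : ℝ → ℝ := fun θ => 1 / (4 * Real.cos θ ^ 2) with hf
  set f' : ℝ → ℝ := fun θ => Real.sin θ / (2 * Real.cos θ ^ 3) with hf'
  set s : Set ℝ := Set.Ioo 0 (Real.pi / 2) with hsdef
  have hcos : ∀ x ∈ s, 0 < Real.cos x := fun x hx =>
    Real.cos_pos_of_mem_Ioo ⟨by linarith [hx.1], hx.2⟩
  have hsin : ∀ x ∈ s, 0 < Real.sin x := fun x hx =>
    Real.sin_pos_of_pos_of_lt_pi hx.1 (by linarith [hx.2])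
  have himg : f '' s = Set.Ioi (1 / 4 : ℝ) := by
    ext y
    constructor
    · rintro ⟨x, hx, rfl⟩
      have hc := hcos x hx
      have hss := hsin x hx
      have hc1 : Real.cos x < 1 := by
        nlinarith [Real.sin_sq_add_cos_sq x, Real.cos_le_one x]
      simp only [hf, Set.mem_Ioi]
      rw [div_lt_div_iff₀ (by norm_num) (by positivity)]
      nlinarith
    · intro hy
      have hy4 : (1:ℝ)/4 < y := hy
      have hy0 : 0 < y := by linarith
      have hsy : 1 / (2 * Real.sqrt y) ∈ Set.Ioo (0:ℝ) 1 := by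
        have h1 : 1 / 2 < Real.sqrt y := by
          rw [show (1:ℝ)/2 = Real.sqrt ((1:ℝ)/4) by
            rw [show (1:ℝ)/4 = (1/2)^2 by norm_num, Real.sqrt_sq]; norm_num]
          exact Real.sqrt_lt_sqrt (by norm_num) hy4
        constructor
        · positivity
        · rw [div_lt_one (by positivity)]; linarith
      refine ⟨Real.arccos (1 / (2 * Real.sqrt y)), ⟨?_, ?_⟩, ?_⟩
      · exact Real.arccos_pos.mpr hsy.2
      · exact Real.arccos_lt_pi_div_two.mpr hsy.1
      · simp only [hf]
        rw [Real.cos_arccos (by linarith [hsy.1]) (by linarith [hsy.2])]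
        rw [div_pow, one_pow]
        rw [mul_pow, Real.sq_sqrt hy0.le]
        field_simp
        ring
  have hderiv : ∀ x ∈ s, HasDerivWithinAt f (f' x) s x := by
    intro x hx
    have hc := hcos x hx
    have h1 : HasDerivAt (fun θ => 4 * Real.cos θ ^ 2)
        (4 * (2 * Real.cos x ^ 1 * (-Real.sin x))) x :=
      ((Real.hasDerivAt_cos x).pow 2).const_mul 4
    have h2 := h1.inv (by positivity)
    have h3 : HasDerivAt f (Real.sin x / (2 * Real.cos x ^ 3)) x := by
      have : f = fun θ => (4 * Real.cos θ ^ 2)⁻¹ := by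
        funext θ; simp [hf, one_div]
      rw [this]
      refine h2.congr_deriv ?_
      field_simp
      ring
    exact h3.hasDerivWithinAt
  have hinj : Set.InjOn f s := by
    intro a ha b hb hab
    have hca := hcos a ha; have hcb := hcos b hb
    simp only [hf] at hab
    field_simp at hab
    have hcc : Real.cos a = Real.cos b := by nlinarith [hab]
    exact Real.injOn_cos ⟨ha.1.le, by linarith [ha.2]⟩ ⟨hb.1.le, by linarith [hb.2]⟩ hcc
  rw [← himg, MeasureTheory.integral_image_eq_integral_abs_deriv_smul
    measurableSet_Ioo hderiv hinj]
  have hcongr : ∀ x ∈ s, |f' x| • (g (2 * m) (f x) * g (2 * n) (f x) *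
        (Real.sqrt (4 * f x - 1) / (2 * Real.pi * f x ^ 2)))
      = (4 / Real.pi) * (Real.sin ((2 * m + 1) * x) * Real.sin ((2 * n + 1) * x)) := by
    intro x hx
    have hc := hcos x hx
    have hs := hsin x hx
    have habs : |f' x| = Real.sin x / (2 * Real.cos x ^ 3) := by
      rw [abs_of_pos (by positivity)]
    have hsqrt : Real.sqrt (4 * f x - 1) = Real.sin x / Real.cos x := by
      have : 4 * f x - 1 = (Real.sin x / Real.cos x) ^ 2 := by
        have hpy := Real.sin_sq_add_cos_sq x
        simp only [hf]
        field_simp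
        nlinarith [hpy]
      rw [this, Real.sqrt_sq (by positivity)]
    have hfx2 : f x ^ 2 = 1 / (16 * Real.cos x ^ 4) := by
      simp only [hf]; rw [div_pow, one_pow]; ring_nf
    rw [habs, gval x hx.1 hx.2 m, gval x hx.1 hx.2 n, hsqrt, hfx2, smul_eq_mul]
    field_simp
    ring
  rw [MeasureTheory.setIntegral_congr_fun measurableSet_Ioo hcongr]
  have hrw : ∫ x in s, (4 / Real.pi) * (Real.sin ((2 * m + 1) * x) * Real.sin ((2 * n + 1) * x))
      = (4 / Real.pi) * ∫ x in (0:ℝ)..(Real.pi/2),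
          Real.sin ((2 * m + 1) * x) * Real.sin ((2 * n + 1) * x) := by
    rw [intervalIntegral.integral_of_le (by positivity),
      ← MeasureTheory.integral_Ioc_eq_integral_Ioo, MeasureTheory.integral_const_mul]
  rw [hrw]
  by_cases hmn : m = n
  · subst hmn
    rw [if_pos rfl]
    rw [sin_sq_int (2 * m + 1) (by positivity)]
    have h0 : Real.sin ((2 * (m:ℝ) + 1) * Real.pi) = 0 := by
      have h := Real.sin_nat_mul_pi (2 * m + 1)
      push_cast at h
      exact h
    rw [h0]
    field_simp
    rw [sub_zero]
  · simp only [if_neg hmn]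
    have hd : (2 * (m:ℝ) + 1) - (2 * (n:ℝ) + 1) ≠ 0 := by
      intro h
      apply hmn
      have : (m:ℝ) = n := by linarith
      exact_mod_cast this
    have hS : (2 * (m:ℝ) + 1) + (2 * (n:ℝ) + 1) ≠ 0 := by positivity
    rw [sin_int_prod _ _ hd hS]
    have h1 : Real.sin (((2 * (m:ℝ) + 1) - (2 * (n:ℝ) + 1)) * (Real.pi / 2)) = 0 := by
      have : ((2 * (m:ℝ) + 1) - (2 * (n:ℝ) + 1)) * (Real.pi / 2)
          = (((m:ℤ) - (n:ℤ) : ℤ) : ℝ) * Real.pi := by push_cast; ring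
      rw [this, Real.sin_int_mul_pi]
    have h2 : Real.sin (((2 * (m:ℝ) + 1) + (2 * (n:ℝ) + 1)) * (Real.pi / 2)) = 0 := by
      have : ((2 * (m:ℝ) + 1) + (2 * (n:ℝ) + 1)) * (Real.pi / 2)
          = ((m + n + 1 : ℕ):ℝ) * Real.pi := by push_cast; ring
      rw [this, Real.sin_nat_mul_pi]
    rw [h1, h2]
    simp
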